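/- arXiv:2307.11439 — 4 statements merged into one kernel-verified Lean document; each statement's English description precedes it below -/
import Mathlib

section
/- Let M_N be a random tensor satisfying Hypothesis (TensorModel) with parameter (c,c'). Then for all σ, σ' ∈ S_{2k}, the quantity Φ_N(M_{N,σ}·M_{N,σ'}^*) converges as N → ∞ to c if σ = σ', and to 0 otherwise. -/
open Filter Matrix

noncomputable section

/-- Glue two `k`-tuples of indices into a `2k`-tuple: positions `0,…,k-1` come from the
row index `i`, positions `k,…,2k-1` come from the column index `j`. -/
def glueIdx (k N : ℕ) (i j : Fin k → Fin N) : Fin (2 * k) → Fin N :=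
  fun s => if h : (s : ℕ) < k then i ⟨s, h⟩ else j ⟨(s : ℕ) - k, by have := s.isLt; omega⟩

/-- The flattening `M_{N,σ}` of a tensor `M ∈ (ℂ^N)^{⊗2k}`: the entry at row `i`
and column `j` is `M(x_{σ⁻¹(1)}, …, x_{σ⁻¹(2k)})` where `(x_1,…,x_{2k}) = (i, j)`. -/
def flatten (k N : ℕ) (M : (Fin (2 * k) → Fin N) → ℂ) (σ : Equiv.Perm (Fin (2 * k))) :
    Matrix (Fin k → Fin N) (Fin k → Fin N) ℂ :=
  fun i j => M fun s => glueIdx k N i j (σ.symm s)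

/-- The matrix `U_{N,η}` permuting the tensor factors of `(ℂ^N)^{⊗k}`:
`U_{N,η}(i,j) = ∏_s δ_{i_s, j_{η(s)}}`. -/
def Umat (k N : ℕ) (η : Equiv.Perm (Fin k)) :
    Matrix (Fin k → Fin N) (Fin k → Fin N) ℂ :=
  fun i j => if ∀ s, i s = j (η s) then 1 else 0

/-- `Φ_N(A) = E[N^{-k} · Tr A]` for a random `N^k × N^k` matrix `A`. -/
def Phi (k N : ℕ) {Ω : Type*} [MeasurableSpace Ω] (μ : MeasureTheory.Measure Ω)
    (A : Ω → Matrix (Fin k → Fin N) (Fin k → Fin N) ℂ) : ℂ :=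
  ∫ ω, ((N : ℂ) ^ k)⁻¹ * (A ω).trace ∂μ

/-- `Fin k ⊕ Fin k ≃ Fin (2k)`: the first summand goes to `0,…,k-1`, the second to
`k,…,2k-1`. -/
def finSumEquiv (k : ℕ) : (Fin k ⊕ Fin k) ≃ Fin (2 * k) :=
  finSumFinEquiv.trans (finCongr (by omega))

/-- The permutation `η ⊔ η'` of `{1,…,2k}` acting as `η` on the first `k` elements and as
`η'` on the last `k` elements. -/
def gluePerm (k : ℕ) (η η' : Equiv.Perm (Fin k)) : Equiv.Perm (Fin (2 * k)) :=
  (finSumEquiv k).permCongr (Equiv.sumCongr η η')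

/-- The involution `τ ∈ S_{2k}` swapping the first and the last `k` elements. -/
def tauPerm (k : ℕ) : Equiv.Perm (Fin (2 * k)) :=
  (finSumEquiv k).permCongr (Equiv.sumComm (Fin k) (Fin k))

/-- Hypothesis (TensorModel) with parameter `(c, c')`: for each `N`, a random tensor in
`(ℂ^N)^{⊗2k}` whose entries are i.i.d. copies of a centered complex random variable `m_N`
(of law `ν N`) having finite moments of all orders, with `N^k·E[|m_N|²] → c > 0`,
`N^k·E[m_N²] → c'`, and `N^k·E[m_N^{ℓ₁}·conj(m_N)^{ℓ₂}] → 0` whenever `ℓ₁ + ℓ₂ > 2`. -/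
structure TensorModel (k : ℕ) (c : ℝ) (c' : ℂ) where
  Ω : ℕ → Type
  [mΩ : ∀ N, MeasurableSpace (Ω N)]
  μ : ∀ N, MeasureTheory.Measure (Ω N)
  [prob : ∀ N, MeasureTheory.IsProbabilityMeasure (μ N)]
  X : ∀ N, (Fin (2 * k) → Fin N) → Ω N → ℂ
  meas : ∀ N i, Measurable (X N i)
  ν : ℕ → MeasureTheory.Measure ℂ
  law : ∀ N i, (μ N).map (X N i) = ν N
  indep : ∀ N, ProbabilityTheory.iIndepFun (X N) (μ N)
  centered : ∀ N, (∫ z : ℂ, z ∂(ν N)) = 0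
  finiteMoments : ∀ N (ℓ : ℕ), MeasureTheory.Integrable (fun z : ℂ => ‖z‖ ^ ℓ) (ν N)
  c_pos : 0 < c
  lim_abs_sq : Tendsto (fun N : ℕ => (N : ℝ) ^ k * ∫ z : ℂ, ‖z‖ ^ 2 ∂(ν N)) atTop (nhds c)
  lim_sq : Tendsto (fun N : ℕ => (N : ℂ) ^ k * ∫ z : ℂ, z ^ 2 ∂(ν N)) atTop (nhds c')
  lim_higher : ∀ ℓ₁ ℓ₂ : ℕ, 2 < ℓ₁ + ℓ₂ →
    Tendsto (fun N : ℕ => (N : ℂ) ^ k * ∫ z : ℂ, z ^ ℓ₁ * (starRingEnd ℂ z) ^ ℓ₂ ∂(ν N))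
      atTop (nhds 0)

instance {k : ℕ} {c : ℝ} {c' : ℂ} (M : TensorModel k c c') (N : ℕ) :
    MeasurableSpace (M.Ω N) := M.mΩ N

instance {k : ℕ} {c : ℝ} {c' : ℂ} (M : TensorModel k c c') (N : ℕ) :
    MeasureTheory.IsProbabilityMeasure (M.μ N) := M.prob N

/-- The flattening `M_{N,σ}` of the random tensor, as a random matrix. -/
def TensorModel.flat {k : ℕ} {c : ℝ} {c' : ℂ} (M : TensorModel k c c') (N : ℕ)
    (σ : Equiv.Perm (Fin (2 * k))) (ω : M.Ω N) :
    Matrix (Fin k → Fin N) (Fin k → Fin N) ℂ :=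
  flatten k N (fun idx => M.X N idx ω) σ

section Aux

open MeasureTheory ProbabilityTheory

/-- `glueIdx` viewed as a map on pairs is injective. -/
lemma glueIdx_injective (k N : ℕ) :
    Function.Injective (fun p : (Fin k → Fin N) × (Fin k → Fin N) =>
      glueIdx k N p.1 p.2) := by
  intro p q h
  have h' := fun s => congrFun h s
  refine Prod.ext ?_ ?_ <;> funext a
  · have := h' ⟨a.1, by omega⟩
    simpa [glueIdx, a.2] using this
  · have ha : ¬ ((k + a.1 : ℕ) < k) := by omega
    have := h' ⟨k + a.1, by omega⟩
    simp only [glueIdx, dif_neg ha] at this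
    simpa [Nat.add_sub_cancel_left] using this

lemma glue_count_le (k N : ℕ) (σ σ' : Equiv.Perm (Fin (2 * k))) (hne : σ ≠ σ') :
    (Finset.univ.filter (fun p : (Fin k → Fin N) × (Fin k → Fin N) =>
      (fun s => glueIdx k N p.1 p.2 (σ.symm s))
        = (fun s => glueIdx k N p.1 p.2 (σ'.symm s)))).card ≤ N ^ (2 * k - 1) := by
  classical
  obtain ⟨s₀, hs₀⟩ : ∃ s, σ.symm s ≠ σ'.symm s := by
    by_contra hc
    push_neg at hc
    apply hne
    have : σ.symm = σ'.symm := Equiv.ext hc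
    rw [← Equiv.symm_symm σ, this, Equiv.symm_symm]
  set a := σ.symm s₀
  set b := σ'.symm s₀
  have hba : b ≠ a := fun h => hs₀ h.symm
  have hcard : Fintype.card ({s : Fin (2 * k) // s ≠ a} → Fin N) = N ^ (2 * k - 1) := by
    rw [Fintype.card_fun, Fintype.card_fin]
    congr 1
    have : Fintype.card {s : Fin (2 * k) // s ≠ a}
        = Fintype.card {s : Fin (2 * k) // ¬ s = a} := rfl
    rw [this, Fintype.card_subtype_compl, Fintype.card_subtype_eq, Fintype.card_fin]
  calc (Finset.univ.filter _).card
      ≤ (Finset.univ : Finset ({s : Fin (2 * k) // s ≠ a} → Fin N)).card := by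
        apply Finset.card_le_card_of_injOn
          (fun p t => glueIdx k N p.1 p.2 t.1) (fun _ _ => Finset.mem_univ _)
        intro p hp q hq hFpq
        simp only [Finset.mem_coe, Finset.mem_filter] at hp hq
        apply glueIdx_injective k N
        funext s
        by_cases hs : s = a
        · have h1 : glueIdx k N p.1 p.2 a = glueIdx k N p.1 p.2 b := congrFun hp.2 s₀
          have h2 : glueIdx k N q.1 q.2 a = glueIdx k N q.1 q.2 b := congrFun hq.2 s₀
          have h3 : glueIdx k N p.1 p.2 b = glueIdx k N q.1 q.2 b := congrFun hFpq ⟨b, hba⟩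
          simp only [hs]
          show glueIdx k N p.1 p.2 a = glueIdx k N q.1 q.2 a
          rw [h1, h3, ← h2]
        · exact congrFun hFpq ⟨s, hs⟩

    _ = N ^ (2 * k - 1) := by rw [Finset.card_univ, hcard]

end Aux


section Main

open MeasureTheory ProbabilityTheory

lemma phi_eq (k : ℕ) (hk : 1 ≤ k) {c : ℝ} {c' : ℂ} (M : TensorModel k c c')
    (σ σ' : Equiv.Perm (Fin (2 * k))) (N : ℕ) :
    Phi k N (M.μ N) (fun ω => M.flat N σ ω * (M.flat N σ' ω)ᴴ)
      = ((N : ℂ) ^ k)⁻¹ *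
        ((Finset.univ.filter (fun p : (Fin k → Fin N) × (Fin k → Fin N) =>
            (fun s => glueIdx k N p.1 p.2 (σ.symm s))
              = (fun s => glueIdx k N p.1 p.2 (σ'.symm s)))).card : ℂ) *
        ((∫ z : ℂ, ‖z‖ ^ 2 ∂(M.ν N) : ℝ) : ℂ) := by
  classical
  rcases Nat.eq_zero_or_pos N with hN | hN
  · subst hN
    simp [Phi, zero_pow (by omega : k ≠ 0)]
  haveI hprob : IsProbabilityMeasure (M.ν N) := by
    rw [← M.law N (fun _ => ⟨0, hN⟩)]
    exact Measure.isProbabilityMeasure_map (M.meas N _).aemeasurable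
  have memtwo : ∀ f : Fin (2 * k) → Fin N, MemLp (M.X N f) 2 (M.μ N) := by
    intro f
    rw [memLp_two_iff_integrable_sq_norm (M.meas N f).aestronglyMeasurable]
    have h1 : Integrable (fun z : ℂ => ‖z‖ ^ 2) (M.ν N) := M.finiteMoments N 2
    rw [← M.law N f] at h1
    exact (integrable_map_measure (continuous_norm.pow 2).aestronglyMeasurable
      (M.meas N f).aemeasurable).mp h1
  have memtwoc : ∀ f : Fin (2 * k) → Fin N,
      MemLp (fun ω => (starRingEnd ℂ) (M.X N f ω)) 2 (M.μ N) := by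
    intro f
    have hm : Measurable (fun ω => (starRingEnd ℂ) (M.X N f ω)) :=
      RCLike.continuous_conj.measurable.comp (M.meas N f)
    rw [memLp_two_iff_integrable_sq_norm hm.aestronglyMeasurable]
    simpa only [RCLike.norm_conj] using
      (memLp_two_iff_integrable_sq_norm (M.meas N f).aestronglyMeasurable).mp (memtwo f)
  have hpqr : (1 : ENNReal) / 1 = 1 / 2 + 1 / 2 := by
    rw [ENNReal.add_halves, one_div, inv_one]
  have integ : ∀ f g : Fin (2 * k) → Fin N,
      Integrable (fun ω => M.X N f ω * (starRingEnd ℂ) (M.X N g ω)) (M.μ N) := by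
    intro f g
    have h := ((memtwoc g).smul (memtwo f) (r := 1)).integrable le_rfl
    exact h.congr (Filter.Eventually.of_forall (fun ω => by simp [smul_eq_mul]))
  have htr : ∀ ω, (M.flat N σ ω * (M.flat N σ' ω)ᴴ).trace
      = ∑ p : (Fin k → Fin N) × (Fin k → Fin N),
          M.X N (fun s => glueIdx k N p.1 p.2 (σ.symm s)) ω *
            (starRingEnd ℂ) (M.X N (fun s => glueIdx k N p.1 p.2 (σ'.symm s)) ω) := by
    intro ω
    rw [Matrix.trace, Fintype.sum_prod_type]
    simp only [Matrix.diag_apply, Matrix.mul_apply, Matrix.conjTranspose_apply,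
      TensorModel.flat, flatten, starRingEnd_apply]
  have hterm : ∀ f g : Fin (2 * k) → Fin N,
      (∫ ω, M.X N f ω * (starRingEnd ℂ) (M.X N g ω) ∂(M.μ N))
        = if f = g then ((∫ z : ℂ, ‖z‖ ^ 2 ∂(M.ν N) : ℝ) : ℂ) else 0 := by
    intro f g
    by_cases hfg : f = g
    · subst hfg
      rw [if_pos rfl]
      have h1 : ∀ ω, M.X N f ω * (starRingEnd ℂ) (M.X N f ω)
          = ((‖M.X N f ω‖ ^ 2 : ℝ) : ℂ) := by
        intro ω
        rw [Complex.mul_conj]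
        norm_cast
        rw [Complex.normSq_eq_norm_sq]
      simp_rw [h1]
      have h2 : ∫ z : ℂ, ‖z‖ ^ 2 ∂(M.ν N) = ∫ ω, ‖M.X N f ω‖ ^ 2 ∂(M.μ N) := by
        rw [← M.law N f]
        exact integral_map (M.meas N f).aemeasurable
          (continuous_norm.pow 2).aestronglyMeasurable
      rw [h2]
      exact integral_ofReal
    · rw [if_neg hfg]
      have hind : IndepFun (M.X N f) (M.X N g) (M.μ N) := (M.indep N).indepFun hfg
      have hmap : (M.μ N).map (fun ω => (M.X N f ω, M.X N g ω)) = (M.ν N).prod (M.ν N) := by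
        rw [(indepFun_iff_map_prod_eq_prod_map_map (M.meas N f).aemeasurable
          (M.meas N g).aemeasurable).mp hind, M.law N f, M.law N g]
      have hcont : Continuous (fun p : ℂ × ℂ => p.1 * (starRingEnd ℂ) p.2) :=
        continuous_fst.mul (continuous_star.comp continuous_snd)
      calc (∫ ω, M.X N f ω * (starRingEnd ℂ) (M.X N g ω) ∂(M.μ N))
          = ∫ p : ℂ × ℂ, p.1 * (starRingEnd ℂ) p.2
              ∂((M.μ N).map (fun ω => (M.X N f ω, M.X N g ω))) :=
            (integral_map ((M.meas N f).prodMk (M.meas N g)).aemeasurable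
              hcont.aestronglyMeasurable).symm
        _ = ∫ p : ℂ × ℂ, p.1 * (starRingEnd ℂ) p.2 ∂((M.ν N).prod (M.ν N)) := by rw [hmap]
        _ = (∫ z : ℂ, z ∂(M.ν N)) * ∫ z : ℂ, (starRingEnd ℂ) z ∂(M.ν N) :=
            integral_prod_mul (fun z : ℂ => z) (fun z : ℂ => (starRingEnd ℂ) z)
        _ = 0 := by rw [M.centered N, zero_mul]
  unfold Phi
  rw [integral_const_mul]
  simp_rw [htr]
  rw [integral_finset_sum _ (fun p _ => integ _ _)]
  rw [Finset.sum_congr rfl (fun p _ => hterm _ _)]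
  rw [Finset.sum_ite, Finset.sum_const, Finset.sum_const_zero, add_zero, nsmul_eq_mul,
    mul_assoc]

end Main

/-- For a random tensor satisfying Hypothesis (TensorModel) with parameter
`(c, c')`, for all `σ, σ' ∈ S_{2k}` the quantity `Φ_N(M_{N,σ} · M_{N,σ'}^*)` converges, as
`N → ∞`, to `c` if `σ = σ'` and to `0` otherwise. -/

theorem flattenings_star_covariance
    (k : ℕ) (hk : 1 ≤ k) (c : ℝ) (c' : ℂ) (M : TensorModel k c c')
    (σ σ' : Equiv.Perm (Fin (2 * k))) :
    Tendsto (fun N : ℕ =>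
        Phi k N (M.μ N) (fun ω => M.flat N σ ω * (M.flat N σ' ω)ᴴ))
      atTop (nhds (if σ = σ' then (c : ℂ) else 0)) := by
  classical
  by_cases hss : σ = σ'
  · subst hss
    rw [if_pos rfl]
    have hev : (fun N : ℕ => ((((N : ℝ) ^ k * ∫ z : ℂ, ‖z‖ ^ 2 ∂(M.ν N)) : ℝ) : ℂ))
        =ᶠ[atTop] (fun N : ℕ =>
          Phi k N (M.μ N) (fun ω => M.flat N σ ω * (M.flat N σ ω)ᴴ)) := by
      filter_upwards [Filter.eventually_ge_atTop 1] with N hN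
      rw [phi_eq k hk M σ σ N]
      have hfil : (Finset.univ.filter (fun p : (Fin k → Fin N) × (Fin k → Fin N) =>
          (fun s => glueIdx k N p.1 p.2 (σ.symm s))
            = (fun s => glueIdx k N p.1 p.2 (σ.symm s)))) = Finset.univ :=
        Finset.filter_true_of_mem (fun _ _ => rfl)
      rw [hfil, Finset.card_univ, Fintype.card_prod, Fintype.card_fun, Fintype.card_fin,
        Fintype.card_fin]
      have hNk : ((N : ℂ) ^ k) ≠ 0 :=
        pow_ne_zero _ (Nat.cast_ne_zero.mpr (by omega))
      push_cast
      field_simp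
    exact Filter.Tendsto.congr' hev ((Complex.continuous_ofReal.tendsto c).comp M.lim_abs_sq)
  · rw [if_neg hss]
    apply squeeze_zero_norm'
      (a := fun N : ℕ => (N : ℝ)⁻¹ * ((N : ℝ) ^ k * ∫ z : ℂ, ‖z‖ ^ 2 ∂(M.ν N)))
    · filter_upwards [Filter.eventually_ge_atTop 1] with N hN
      rw [phi_eq k hk M σ σ' N]
      have hV0 : 0 ≤ ∫ z : ℂ, ‖z‖ ^ 2 ∂(M.ν N) :=
        MeasureTheory.integral_nonneg (fun z => by positivity)
      rw [norm_mul, norm_mul, norm_inv, norm_pow]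
      simp only [Complex.norm_natCast, Complex.norm_real, Real.norm_eq_abs,
        abs_of_nonneg hV0]
      have hcd := glue_count_le k N σ σ' hss
      have hN0 : (0 : ℝ) < (N : ℝ) := by
        have : (1 : ℕ) ≤ N := hN
        exact_mod_cast Nat.lt_of_lt_of_le Nat.zero_lt_one this
      set V := ∫ z : ℂ, ‖z‖ ^ 2 ∂(M.ν N) with hV
      calc (((N : ℝ) ^ k)⁻¹ * ((Finset.univ.filter (fun p : (Fin k → Fin N) × (Fin k → Fin N) =>
            (fun s => glueIdx k N p.1 p.2 (σ.symm s))
              = (fun s => glueIdx k N p.1 p.2 (σ'.symm s)))).card : ℝ)) * V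
          ≤ (((N : ℝ) ^ k)⁻¹ * ((N : ℝ) ^ (2 * k - 1))) * V := by
            apply mul_le_mul_of_nonneg_right _ hV0
            apply mul_le_mul_of_nonneg_left _ (by positivity)
            exact_mod_cast Nat.cast_le.mpr hcd
        _ = (N : ℝ)⁻¹ * ((N : ℝ) ^ k * V) := by
            have e1 : (N : ℝ) ^ (2 * k - 1) = (N : ℝ) ^ (k - 1) * (N : ℝ) ^ k := by
              rw [← pow_add]; congr 1; omega
            have e2 : (N : ℝ) ^ k = (N : ℝ) * (N : ℝ) ^ (k - 1) := by
              rw [← pow_succ']; congr 1; omega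
            rw [e1, e2]
            field_simp
    · have h1 : Tendsto (fun N : ℕ => (N : ℝ)⁻¹) atTop (nhds 0) :=
        tendsto_inv_atTop_nhds_zero_nat
      simpa using h1.mul M.lim_abs_sq
end
end

section
/- For every integer k ≥ 1, every N ≥ 1, every pair η₁, η₂ ∈ S_k, and every N^k × N^k complex matrix A, one has 𝓔_N(U_{N,η₁}·A·U_{N,η₂}) = U_{N,η₁}·𝓔_N(A)·U_{N,η₂}. Consequently, by linearity, 𝓔_N(B·A·B') = B·𝓔_N(A)·B' for all B, B' in the linear span of the matrices U_{N,η}, η ∈ S_k. -/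
open Matrix

noncomputable section

/-- The conditional expectation `𝓔_N(A) = Σ_{η ∈ S_k} N^{-k}·Tr(A·U_{N,η}^*)·U_{N,η}`. -/
def Emap (k N : ℕ) (A : Matrix (Fin k → Fin N) (Fin k → Fin N) ℂ) :
    Matrix (Fin k → Fin N) (Fin k → Fin N) ℂ :=
  ∑ η : Equiv.Perm (Fin k), (((N : ℂ) ^ k)⁻¹ * (A * (Umat k N η)ᴴ).trace) • Umat k N η

lemma Umat_conjTranspose (k N : ℕ) (η : Equiv.Perm (Fin k)) :
    (Umat k N η)ᴴ = Umat k N η⁻¹ := by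
  ext i j
  have hiff : (∀ s, j s = i (η s)) ↔ (∀ s, i s = j (η⁻¹ s)) := by
    constructor
    · intro h s; rw [h (η⁻¹ s), ← Equiv.Perm.mul_apply, mul_inv_cancel, Equiv.Perm.one_apply]
    · intro h s; rw [h (η s), ← Equiv.Perm.mul_apply, inv_mul_cancel, Equiv.Perm.one_apply]
  simp only [Umat, conjTranspose_apply, apply_ite (star : ℂ → ℂ), star_one, star_zero]
  exact if_congr hiff rfl rfl

lemma Umat_mul (k N : ℕ) (α β : Equiv.Perm (Fin k)) :
    Umat k N α * Umat k N β = Umat k N (β * α) := by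
  ext i j
  simp only [Matrix.mul_apply, Umat]
  rw [Finset.sum_eq_single (fun s => j (β s))]
  · simp [Equiv.Perm.mul_apply]
    exact if_congr Iff.rfl rfl rfl
  · intro l _ hl
    have : ¬ ∀ s, l s = j (β s) := fun h => hl (funext h)
    simp [this]
  · simp

lemma Emap_add (k N : ℕ) (X Y : Matrix (Fin k → Fin N) (Fin k → Fin N) ℂ) :
    Emap k N (X + Y) = Emap k N X + Emap k N Y := by
  simp [Emap, add_mul, Matrix.trace_add, mul_add, add_smul, Finset.sum_add_distrib]

lemma Emap_smul (k N : ℕ) (c : ℂ) (X : Matrix (Fin k → Fin N) (Fin k → Fin N) ℂ) :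
    Emap k N (c • X) = c • Emap k N X := by
  simp only [Emap, smul_mul_assoc, Matrix.trace_smul, smul_eq_mul, Finset.smul_sum, smul_smul]
  congr 1; ext η; ring_nf

lemma Emap_zero (k N : ℕ) : Emap k N 0 = 0 := by
  simp [Emap]

lemma Emap_conj (k N : ℕ) (η₁ η₂ : Equiv.Perm (Fin k))
    (A : Matrix (Fin k → Fin N) (Fin k → Fin N) ℂ) :
    Emap k N (Umat k N η₁ * A * Umat k N η₂) =
      Umat k N η₁ * Emap k N A * Umat k N η₂ := by
  unfold Emap
  rw [Matrix.mul_sum, Finset.sum_mul]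
  refine Fintype.sum_equiv ((Equiv.mulRight η₁⁻¹).trans (Equiv.mulLeft η₂⁻¹)) _ _ ?_
  intro σ
  simp only [Equiv.trans_apply, Equiv.coe_mulRight, Equiv.coe_mulLeft]
  rw [Umat_conjTranspose, Umat_conjTranspose]
  have hM : Umat k N η₁ * Umat k N (η₂⁻¹ * (σ * η₁⁻¹)) * Umat k N η₂ = Umat k N σ := by
    rw [Umat_mul, Umat_mul]
    group
  have hT : (Umat k N η₁ * A * Umat k N η₂ * Umat k N σ⁻¹).trace =
      (A * Umat k N (η₂⁻¹ * (σ * η₁⁻¹))⁻¹).trace := by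
    rw [show Umat k N η₁ * A * Umat k N η₂ * Umat k N σ⁻¹ =
        Umat k N η₁ * (A * (Umat k N η₂ * Umat k N σ⁻¹)) by rw [mul_assoc, mul_assoc],
      Matrix.trace_mul_comm, Umat_mul, mul_assoc, Umat_mul]
    congr 2
  rw [hT, mul_smul_comm, smul_mul_assoc, hM]

/-- For every `k ≥ 1`, `N ≥ 1`, all `η₁, η₂ ∈ S_k` and every `N^k × N^k`
matrix `A`, one has `𝓔_N(U_{N,η₁}·A·U_{N,η₂}) = U_{N,η₁}·𝓔_N(A)·U_{N,η₂}`; consequently,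
by linearity, `𝓔_N(B·A·B') = B·𝓔_N(A)·B'` for all `B, B'` in the linear span of the
matrices `U_{N,η}`, `η ∈ S_k`. -/
theorem Emap_bimodule (k N : ℕ) (hk : 1 ≤ k) (hN : 1 ≤ N) :
    (∀ (η₁ η₂ : Equiv.Perm (Fin k)) (A : Matrix (Fin k → Fin N) (Fin k → Fin N) ℂ),
        Emap k N (Umat k N η₁ * A * Umat k N η₂) =
          Umat k N η₁ * Emap k N A * Umat k N η₂) ∧
      (∀ B B' : Matrix (Fin k → Fin N) (Fin k → Fin N) ℂ,
        B ∈ Submodule.span ℂ (Set.range (Umat k N)) →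
        B' ∈ Submodule.span ℂ (Set.range (Umat k N)) →
        ∀ A : Matrix (Fin k → Fin N) (Fin k → Fin N) ℂ,
          Emap k N (B * A * B') = B * Emap k N A * B') := by
  refine ⟨Emap_conj k N, ?_⟩
  intro B B' hB hB' A
  have step1 : ∀ (η₁ : Equiv.Perm (Fin k))
      (B' : Matrix (Fin k → Fin N) (Fin k → Fin N) ℂ),
      B' ∈ Submodule.span ℂ (Set.range (Umat k N)) →
      ∀ A, Emap k N (Umat k N η₁ * A * B') = Umat k N η₁ * Emap k N A * B' := by
    intro η₁ B' hB'
    induction hB' using Submodule.span_induction with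
    | mem x hx =>
      obtain ⟨η₂, rfl⟩ := hx
      exact fun A => Emap_conj k N η₁ η₂ A
    | zero => intro A; simp [Emap_zero]
    | add x y hx hy ihx ihy =>
      intro A
      rw [mul_add, Emap_add, ihx A, ihy A, mul_add]
    | smul c x hx ih =>
      intro A
      rw [mul_smul_comm, Emap_smul, ih A, mul_smul_comm]
  revert A
  induction hB using Submodule.span_induction with
  | mem x hx =>
    obtain ⟨η₁, rfl⟩ := hx
    exact step1 η₁ B' hB'
  | zero => intro A; simp [Emap_zero]
  | add x y hx hy ihx ihy =>
    intro A
    rw [add_mul, add_mul, Emap_add, ihx A, ihy A, add_mul, add_mul]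
  | smul c x hx ih =>
    intro A
    rw [smul_mul_assoc, smul_mul_assoc, Emap_smul, ih A, smul_mul_assoc, smul_mul_assoc]
end
end

section
/- Let k ≥ 1 and let M_N be a random tensor satisfying Hypothesis (TensorModel) with parameter (c,c'). Set S_{2,N} = ((2k)!·k!·c)^{-1/2} · Σ_{σ ∈ S_{2k}} sgn(σ)·M_{N,σ}. Then for all η, η' ∈ S_k, Φ_N(S_{2,N}·U_{N,η}·S_{2,N}^*·U_{N,η'}^*) converges to sgn(η)·sgn(η')/k! as N → ∞. -/
open Filter Matrix

noncomputable section

section PureLemmas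
open Equiv

lemma glueIdx_eq (k N : ℕ) (i j : Fin k → Fin N) :
    glueIdx k N i j = Sum.elim i j ∘ ⇑(finSumEquiv k).symm := by
  funext s
  rcases lt_or_ge (s : ℕ) k with h | h
  · have : (finSumEquiv k).symm s = Sum.inl ⟨s, h⟩ := by
      rw [Equiv.symm_apply_eq]
      simp [finSumEquiv, finSumFinEquiv]
    simp [glueIdx, this, h]
  · have hlt : (s : ℕ) - k < k := by have := s.isLt; omega
    have : (finSumEquiv k).symm s = Sum.inr ⟨(s : ℕ) - k, hlt⟩ := by
      rw [Equiv.symm_apply_eq]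
      simp [finSumEquiv, finSumFinEquiv]
      ext; simp; omega
    simp [glueIdx, this, not_lt.2 h]

def glueFun (k N : ℕ) : ((Fin k → Fin N) × (Fin k → Fin N)) ≃ (Fin (2 * k) → Fin N) :=
  (Equiv.sumArrowEquivProdArrow (Fin k) (Fin k) (Fin N)).symm.trans
    (Equiv.arrowCongr (finSumEquiv k) (Equiv.refl (Fin N)))

lemma glueFun_apply (k N : ℕ) (i j : Fin k → Fin N) :
    glueFun k N (i, j) = glueIdx k N i j := by
  funext s
  rw [glueIdx_eq]
  simp [glueFun, Equiv.sumArrowEquivProdArrow, Equiv.arrowCongr]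
  try cases h : (finSumEquiv k).symm s <;> simp [h]

lemma glue_comp_perm (k N : ℕ) (i j : Fin k → Fin N) (a b : Equiv.Perm (Fin k)) :
    glueIdx k N (i ∘ ⇑a) (j ∘ ⇑b) = glueIdx k N i j ∘ ⇑(gluePerm k a b) := by
  rw [glueIdx_eq, glueIdx_eq]
  funext s
  simp only [gluePerm, Equiv.permCongr_apply, Function.comp_apply, Equiv.symm_apply_apply]
  cases h : (finSumEquiv k).symm s <;> simp [h]

lemma sign_gluePerm (k : ℕ) (a b : Equiv.Perm (Fin k)) :
    Equiv.Perm.sign (gluePerm k a b) = Equiv.Perm.sign a * Equiv.Perm.sign b := by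
  rw [gluePerm, Equiv.Perm.sign_permCongr, Equiv.Perm.sign_sumCongr]

-- swap fixed lemma
lemma comp_swap_eq_self {n N : ℕ} (f : Fin n → Fin N) {a b : Fin n} (hab : a ≠ b)
    (hf : f a = f b) : f ∘ ⇑(Equiv.swap a b) = f := by
  funext x
  rcases eq_or_ne x a with rfl | hxa
  · simp [Equiv.swap_apply_left, hf]
  rcases eq_or_ne x b with rfl | hxb
  · simp [Equiv.swap_apply_right, hf]
  · simp [Equiv.swap_apply_of_ne_of_ne hxa hxb]

lemma sign_stab_sum {n N : ℕ} (f : Fin n → Fin N) :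
    ∑ ρ : Equiv.Perm (Fin n), (if f ∘ ⇑ρ = f then ((Equiv.Perm.sign ρ : ℤ) : ℂ) else 0)
      = if Function.Injective f then 1 else 0 := by
  by_cases hf : Function.Injective f
  · rw [if_pos hf]
    rw [Finset.sum_eq_single (1 : Equiv.Perm (Fin n))]
    · simp
    · intro ρ _ hρ
      rw [if_neg]
      intro h
      apply hρ
      exact Equiv.ext fun x => hf (congrFun h x)
    · simp
  · rw [if_neg hf]
    simp only [Function.Injective, not_forall] at hf
    obtain ⟨a, b, hfab, hab⟩ := hf
    apply Finset.sum_involution (fun ρ _ => ρ * Equiv.swap a b)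
    · intro ρ _
      by_cases h : f ∘ ⇑ρ = f
      · have h2 : f ∘ ⇑(ρ * Equiv.swap a b) = f := by
          rw [Equiv.Perm.coe_mul, ← Function.comp_assoc, h, comp_swap_eq_self f hab hfab]
        rw [if_pos h, if_pos h2, Equiv.Perm.sign_mul, Equiv.Perm.sign_swap hab]
        push_cast
        ring
      · have h2 : ¬ f ∘ ⇑(ρ * Equiv.swap a b) = f := by
          intro hc
          apply h
          have := congrArg (fun g => g ∘ ⇑(Equiv.swap a b)) hc
          simp only [Equiv.Perm.coe_mul] at this
          rw [Function.comp_assoc] at this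
          have hsw : ⇑(Equiv.swap a b) ∘ ⇑(Equiv.swap a b) = id := by
            funext x; simp
          rw [Function.comp_assoc, hsw, Function.comp_id,
            comp_swap_eq_self f hab hfab] at this
          exact this
        rw [if_neg h, if_neg h2]; ring
    · intro ρ _ _
      simp only [ne_eq, mul_eq_left]
      intro h
      exact hab (by simpa using (congrArg (fun e => e.toFun a) h).symm)
    · intro ρ _; exact Finset.mem_univ _
    · intro ρ _
      simp [mul_assoc]

lemma count_inj (n N : ℕ) :
    ∑ f : Fin n → Fin N, (if Function.Injective f then (1 : ℂ) else 0)
      = (N.descFactorial n : ℂ) := by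
  classical
  rw [Finset.sum_boole]
  norm_cast
  rw [← Fintype.card_subtype]
  rw [Fintype.card_congr (Equiv.subtypeInjectiveEquivEmbedding (Fin n) (Fin N)),
    Fintype.card_embedding_eq, Fintype.card_fin, Fintype.card_fin]

-- condition iff
lemma cond_iff {m N : ℕ} (f : Fin m → Fin N) (G σ σ' : Equiv.Perm (Fin m)) :
    (f ∘ ⇑G ∘ ⇑σ.symm = f ∘ ⇑σ'.symm) ↔ (f ∘ ⇑(G * σ⁻¹ * σ') = f) := by
  constructor
  · intro h
    funext x
    have := congrFun h (σ' x)
    simpa [Equiv.Perm.mul_apply] using this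
  · intro h
    funext x
    have := congrFun h (σ'.symm x)
    simpa [Equiv.Perm.mul_apply] using this

lemma sign_sq {m : ℕ} (σ : Equiv.Perm (Fin m)) :
    ((Equiv.Perm.sign σ : ℤ) : ℂ) * ((Equiv.Perm.sign σ : ℤ) : ℂ) = 1 := by
  norm_cast
  rw [Int.units_mul_self]
  rfl

lemma comb (k N : ℕ) (η η' : Equiv.Perm (Fin k)) :
    ∑ p : Fin k → Fin N, ∑ l : Fin k → Fin N,
      ∑ σ : Equiv.Perm (Fin (2 * k)), ∑ σ' : Equiv.Perm (Fin (2 * k)),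
        ((Equiv.Perm.sign σ : ℤ) : ℂ) * ((Equiv.Perm.sign σ' : ℤ) : ℂ) *
          (if glueIdx k N (p ∘ ⇑η') (l ∘ ⇑η) ∘ ⇑σ.symm = glueIdx k N p l ∘ ⇑σ'.symm
            then 1 else 0)
      = ((2 * k).factorial : ℂ) * (((Equiv.Perm.sign η : ℤ) : ℂ) *
          ((Equiv.Perm.sign η' : ℤ) : ℂ)) * (N.descFactorial (2 * k) : ℂ) := by
  classical
  set G := gluePerm k η' η with hG
  set H : (Fin (2 * k) → Fin N) → ℂ := fun f =>
    ∑ σ : Equiv.Perm (Fin (2 * k)), ∑ σ' : Equiv.Perm (Fin (2 * k)),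
      ((Equiv.Perm.sign σ : ℤ) : ℂ) * ((Equiv.Perm.sign σ' : ℤ) : ℂ) *
        (if f ∘ ⇑(G * σ⁻¹ * σ') = f then 1 else 0) with hH
  have claimA : ∀ p l : Fin k → Fin N,
      (∑ σ : Equiv.Perm (Fin (2 * k)), ∑ σ' : Equiv.Perm (Fin (2 * k)),
        ((Equiv.Perm.sign σ : ℤ) : ℂ) * ((Equiv.Perm.sign σ' : ℤ) : ℂ) *
          (if glueIdx k N (p ∘ ⇑η') (l ∘ ⇑η) ∘ ⇑σ.symm = glueIdx k N p l ∘ ⇑σ'.symm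
            then 1 else 0)) = H (glueIdx k N p l) := by
    intro p l
    simp only [hH]
    refine Finset.sum_congr rfl fun σ _ => Finset.sum_congr rfl fun σ' _ => ?_
    congr 1
    have hiff : (glueIdx k N (p ∘ ⇑η') (l ∘ ⇑η) ∘ ⇑σ.symm = glueIdx k N p l ∘ ⇑σ'.symm)
        ↔ (glueIdx k N p l ∘ ⇑(G * σ⁻¹ * σ') = glueIdx k N p l) := by
      rw [glue_comp_perm, Function.comp_assoc, ← hG]
      exact cond_iff (glueIdx k N p l) G σ σ'
    exact if_congr hiff rfl rfl
  have claimC : ∀ f : Fin (2 * k) → Fin N,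
      H f = ((2 * k).factorial : ℂ) * (((Equiv.Perm.sign η : ℤ) : ℂ) *
          ((Equiv.Perm.sign η' : ℤ) : ℂ)) *
        ∑ ρ : Equiv.Perm (Fin (2 * k)),
          (if f ∘ ⇑ρ = f then ((Equiv.Perm.sign ρ : ℤ) : ℂ) else 0) := by
    intro f
    simp only [hH]
    have step : ∀ σ : Equiv.Perm (Fin (2 * k)),
        (∑ σ' : Equiv.Perm (Fin (2 * k)),
          ((Equiv.Perm.sign σ : ℤ) : ℂ) * ((Equiv.Perm.sign σ' : ℤ) : ℂ) *
            (if f ∘ ⇑(G * σ⁻¹ * σ') = f then 1 else 0))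
        = (((Equiv.Perm.sign η : ℤ) : ℂ) * ((Equiv.Perm.sign η' : ℤ) : ℂ)) *
          ∑ ρ : Equiv.Perm (Fin (2 * k)),
            (if f ∘ ⇑ρ = f then ((Equiv.Perm.sign ρ : ℤ) : ℂ) else 0) := by
      intro σ
      rw [← Equiv.sum_comp (Equiv.mulLeft (σ * G⁻¹))
        (fun σ' : Equiv.Perm (Fin (2 * k)) =>
          ((Equiv.Perm.sign σ : ℤ) : ℂ) * ((Equiv.Perm.sign σ' : ℤ) : ℂ) *
            (if f ∘ ⇑(G * σ⁻¹ * σ') = f then 1 else 0)), Finset.mul_sum]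
      refine Finset.sum_congr rfl fun ρ _ => ?_
      simp only [Equiv.coe_mulLeft]
      have h1 : G * σ⁻¹ * (σ * G⁻¹ * ρ) = ρ := by group
      simp only [h1]
      have hsgn : ((Equiv.Perm.sign (σ * G⁻¹ * ρ) : ℤ) : ℂ)
          = ((Equiv.Perm.sign σ : ℤ) : ℂ) * (((Equiv.Perm.sign η : ℤ) : ℂ) *
            ((Equiv.Perm.sign η' : ℤ) : ℂ)) * ((Equiv.Perm.sign ρ : ℤ) : ℂ) := by
        rw [Equiv.Perm.sign_mul, Equiv.Perm.sign_mul, Equiv.Perm.sign_inv, hG,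
          sign_gluePerm]
        push_cast
        ring
      rw [hsgn]
      rcases eq_or_ne (f ∘ ⇑ρ) f with h | h
      · rw [if_pos h, if_pos h]
        linear_combination (((Equiv.Perm.sign η : ℤ) : ℂ) * ((Equiv.Perm.sign η' : ℤ) : ℂ)
          * ((Equiv.Perm.sign ρ : ℤ) : ℂ)) * sign_sq σ
      · rw [if_neg h, if_neg h]; ring
    rw [Finset.sum_congr rfl fun σ _ => step σ]
    rw [Finset.sum_const, Finset.card_univ, Fintype.card_perm, Fintype.card_fin]
    push_cast
    ring
  calc ∑ p : Fin k → Fin N, ∑ l : Fin k → Fin N,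
      ∑ σ : Equiv.Perm (Fin (2 * k)), ∑ σ' : Equiv.Perm (Fin (2 * k)),
        ((Equiv.Perm.sign σ : ℤ) : ℂ) * ((Equiv.Perm.sign σ' : ℤ) : ℂ) *
          (if glueIdx k N (p ∘ ⇑η') (l ∘ ⇑η) ∘ ⇑σ.symm = glueIdx k N p l ∘ ⇑σ'.symm
            then 1 else 0)
      = ∑ p : Fin k → Fin N, ∑ l : Fin k → Fin N, H (glueIdx k N p l) := by
        exact Finset.sum_congr rfl fun p _ => Finset.sum_congr rfl fun l _ => claimA p l
    _ = ∑ f : Fin (2 * k) → Fin N, H f := by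
        rw [← Equiv.sum_comp (glueFun k N) H, Fintype.sum_prod_type]
        exact Finset.sum_congr rfl fun p _ => Finset.sum_congr rfl fun l _ => by
          rw [glueFun_apply]
    _ = ((2 * k).factorial : ℂ) * (((Equiv.Perm.sign η : ℤ) : ℂ) *
          ((Equiv.Perm.sign η' : ℤ) : ℂ)) * (N.descFactorial (2 * k) : ℂ) := by
        rw [Finset.sum_congr rfl fun f _ => claimC f, ← Finset.mul_sum]
        congr 1
        rw [Finset.sum_congr rfl fun f _ => sign_stab_sum f]
        exact count_inj (2 * k) N


lemma Umat_apply (k N : ℕ) (η : Equiv.Perm (Fin k)) (i j : Fin k → Fin N) :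
    Umat k N η i j = if i = j ∘ ⇑η then 1 else 0 := by
  unfold Umat
  congr 1
  simp [funext_iff, Function.comp]

lemma trace_formula (k N : ℕ) (A : Matrix (Fin k → Fin N) (Fin k → Fin N) ℂ)
    (η η' : Equiv.Perm (Fin k)) :
    (A * Umat k N η * Aᴴ * (Umat k N η')ᴴ).trace
      = ∑ p : Fin k → Fin N, ∑ l : Fin k → Fin N,
          A (p ∘ ⇑η') (l ∘ ⇑η) * (starRingEnd ℂ) (A p l) := by
  classical
  have hAU : ∀ i y, (A * Umat k N η) i y = A i (y ∘ ⇑η) := by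
    intro i y
    rw [Matrix.mul_apply]
    simp [Umat_apply, mul_ite]
  calc (A * Umat k N η * Aᴴ * (Umat k N η')ᴴ).trace
      = ∑ i : Fin k → Fin N, ∑ p : Fin k → Fin N,
          (A * Umat k N η * Aᴴ) i p * (starRingEnd ℂ) (Umat k N η' i p) := by
        simp [Matrix.trace, Matrix.diag, Matrix.mul_apply, Matrix.conjTranspose_apply]
    _ = ∑ p : Fin k → Fin N, ∑ i : Fin k → Fin N,
          (A * Umat k N η * Aᴴ) i p * (starRingEnd ℂ) (Umat k N η' i p) :=
        Finset.sum_comm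
    _ = ∑ p : Fin k → Fin N, (A * Umat k N η * Aᴴ) (p ∘ ⇑η') p := by
        refine Finset.sum_congr rfl fun p _ => ?_
        simp only [Umat_apply, apply_ite (starRingEnd ℂ), _root_.map_one, map_zero,
          mul_ite, mul_one, mul_zero]
        rw [Finset.sum_ite_eq' Finset.univ (p ∘ ⇑η')
          (fun i => (A * Umat k N η * Aᴴ) i p)]
        simp
    _ = ∑ p : Fin k → Fin N, ∑ l : Fin k → Fin N,
          A (p ∘ ⇑η') (l ∘ ⇑η) * (starRingEnd ℂ) (A p l) := by
        refine Finset.sum_congr rfl fun p _ => ?_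
        rw [Matrix.mul_apply]
        refine Finset.sum_congr rfl fun l _ => ?_
        rw [Matrix.conjTranspose_apply, hAU]
        rfl

end PureLemmas

/-- `S_{2,N} = ((2k)!·k!·c)^{-1/2} · Σ_{σ ∈ S_{2k}} sgn(σ)·M_{N,σ}`. -/
def S2 {k : ℕ} {c : ℝ} {c' : ℂ} (M : TensorModel k c c') (N : ℕ) (ω : M.Ω N) :
    Matrix (Fin k → Fin N) (Fin k → Fin N) ℂ :=
  (((Real.sqrt ((((2 * k).factorial * k.factorial : ℕ) : ℝ) * c))⁻¹ : ℝ) : ℂ) •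
    ∑ σ : Equiv.Perm (Fin (2 * k)),
      (((Equiv.Perm.sign σ : ℤ) : ℂ)) • M.flat N σ ω


def alphaC (k : ℕ) (c : ℝ) : ℂ :=
  (((Real.sqrt ((((2 * k).factorial * k.factorial : ℕ) : ℝ) * c))⁻¹ : ℝ) : ℂ)

section ProbLemmas
open MeasureTheory ProbabilityTheory

lemma indepFun_integral_mul_complex {Ω : Type*} [MeasurableSpace Ω] {μ : Measure Ω}
    {f g : Ω → ℂ} (h : IndepFun f g μ) (hf : Integrable f μ) (hg : Integrable g μ) :
    ∫ ω, f ω * g ω ∂μ = (∫ ω, f ω ∂μ) * ∫ ω, g ω ∂μ := by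
  have hfg : Integrable (f * g) μ := h.integrable_mul hf hg
  have hfr : Integrable (fun ω => (f ω).re) μ := by
    simpa [RCLike.re_to_complex] using hf.re
  have hfi : Integrable (fun ω => (f ω).im) μ := by
    simpa [RCLike.im_to_complex] using hf.im
  have hgr : Integrable (fun ω => (g ω).re) μ := by
    simpa [RCLike.re_to_complex] using hg.re
  have hgi : Integrable (fun ω => (g ω).im) μ := by
    simpa [RCLike.im_to_complex] using hg.im
  have h11 : IndepFun (fun ω => (f ω).re) (fun ω => (g ω).re) μ :=
    h.comp Complex.measurable_re Complex.measurable_re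
  have h12 : IndepFun (fun ω => (f ω).re) (fun ω => (g ω).im) μ :=
    h.comp Complex.measurable_re Complex.measurable_im
  have h21 : IndepFun (fun ω => (f ω).im) (fun ω => (g ω).re) μ :=
    h.comp Complex.measurable_im Complex.measurable_re
  have h22 : IndepFun (fun ω => (f ω).im) (fun ω => (g ω).im) μ :=
    h.comp Complex.measurable_im Complex.measurable_im
  have e11 := h11.integral_fun_mul_eq_mul_integral hfr.aestronglyMeasurable hgr.aestronglyMeasurable
  have e12 := h12.integral_fun_mul_eq_mul_integral hfr.aestronglyMeasurable hgi.aestronglyMeasurable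
  have e21 := h21.integral_fun_mul_eq_mul_integral hfi.aestronglyMeasurable hgr.aestronglyMeasurable
  have e22 := h22.integral_fun_mul_eq_mul_integral hfi.aestronglyMeasurable hgi.aestronglyMeasurable
  have e11' : ∫ ω, (f ω).re * (g ω).re ∂μ = (∫ ω, (f ω).re ∂μ) * ∫ ω, (g ω).re ∂μ := e11
  have e12' : ∫ ω, (f ω).re * (g ω).im ∂μ = (∫ ω, (f ω).re ∂μ) * ∫ ω, (g ω).im ∂μ := e12
  have e21' : ∫ ω, (f ω).im * (g ω).re ∂μ = (∫ ω, (f ω).im ∂μ) * ∫ ω, (g ω).re ∂μ := e21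
  have e22' : ∫ ω, (f ω).im * (g ω).im ∂μ = (∫ ω, (f ω).im ∂μ) * ∫ ω, (g ω).im ∂μ := e22
  have hfg' : Integrable (fun ω => f ω * g ω) μ := hfg
  have hfre : (∫ ω, f ω ∂μ).re = ∫ ω, (f ω).re ∂μ := by
    simpa [RCLike.re_to_complex] using (integral_re hf).symm
  have hgre : (∫ ω, g ω ∂μ).re = ∫ ω, (g ω).re ∂μ := by
    simpa [RCLike.re_to_complex] using (integral_re hg).symm
  have hfim : (∫ ω, f ω ∂μ).im = ∫ ω, (f ω).im ∂μ := by
    simpa [RCLike.im_to_complex] using (integral_im hf).symm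
  have hgim : (∫ ω, g ω ∂μ).im = ∫ ω, (g ω).im ∂μ := by
    simpa [RCLike.im_to_complex] using (integral_im hg).symm
  have hre : (∫ ω, f ω * g ω ∂μ).re = ∫ ω, (f ω * g ω).re ∂μ := by
    simpa [RCLike.re_to_complex] using (integral_re hfg').symm
  have him : (∫ ω, f ω * g ω ∂μ).im = ∫ ω, (f ω * g ω).im ∂μ := by
    simpa [RCLike.im_to_complex] using (integral_im hfg').symm
  have i11 : Integrable (fun ω => (f ω).re * (g ω).re) μ := h11.integrable_mul hfr hgr
  have i22 : Integrable (fun ω => (f ω).im * (g ω).im) μ := h22.integrable_mul hfi hgi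
  have i12 : Integrable (fun ω => (f ω).re * (g ω).im) μ := h12.integrable_mul hfr hgi
  have i21 : Integrable (fun ω => (f ω).im * (g ω).re) μ := h21.integrable_mul hfi hgr
  apply Complex.ext
  · rw [hre, Complex.mul_re, hfre, hgre, hfim, hgim]
    have heq : ∀ ω, (f ω * g ω).re = (f ω).re * (g ω).re - (f ω).im * (g ω).im := by
      intro ω; simp [Complex.mul_re]
    rw [integral_congr_ae (Filter.Eventually.of_forall heq), integral_sub i11 i22,
      e11', e22']
  · rw [him, Complex.mul_im, hfre, hgre, hfim, hgim]
    have heq : ∀ ω, (f ω * g ω).im = (f ω).re * (g ω).im + (f ω).im * (g ω).re := by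
      intro ω; simp [Complex.mul_im]
    rw [integral_congr_ae (Filter.Eventually.of_forall heq), integral_add i12 i21,
      e12', e21']


lemma measurable_conj' : Measurable (starRingEnd ℂ) := continuous_star.measurable

namespace TensorModel

variable {k : ℕ} {c : ℝ} {c' : ℂ} (M : TensorModel k c c') (N : ℕ)

lemma integrable_X (a : Fin (2 * k) → Fin N) : Integrable (M.X N a) (M.μ N) := by
  have h1 : Integrable (fun z : ℂ => z) (M.ν N) := by
    refine (integrable_norm_iff aestronglyMeasurable_id).mp ?_
    simpa using M.finiteMoments N 1
  have h2 : Integrable (fun z : ℂ => z) ((M.μ N).map (M.X N a)) := by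
    rw [M.law N a]; exact h1
  exact (integrable_map_measure aestronglyMeasurable_id
    (M.meas N a).aemeasurable).mp h2

lemma integrable_normsq_X (a : Fin (2 * k) → Fin N) :
    Integrable (fun ω => ‖M.X N a ω‖ ^ 2) (M.μ N) := by
  have h2 : Integrable (fun z : ℂ => ‖z‖ ^ 2) ((M.μ N).map (M.X N a)) := by
    rw [M.law N a]; exact M.finiteMoments N 2
  exact (integrable_map_measure (measurable_norm.pow_const 2).aestronglyMeasurable
    (M.meas N a).aemeasurable).mp h2

lemma integrable_mul_conj (a b : Fin (2 * k) → Fin N) :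
    Integrable (fun ω => M.X N a ω * (starRingEnd ℂ) (M.X N b ω)) (M.μ N) := by
  refine Integrable.mono' ((M.integrable_normsq_X N a).add (M.integrable_normsq_X N b))
    ?_ ?_
  · exact ((M.meas N a).mul (measurable_conj'.comp (M.meas N b))).aestronglyMeasurable
  · refine Filter.Eventually.of_forall fun ω => ?_
    have h : ‖M.X N a ω * (starRingEnd ℂ) (M.X N b ω)‖
        = ‖M.X N a ω‖ * ‖M.X N b ω‖ := by
      rw [norm_mul, RCLike.norm_conj]
    simp only [Pi.add_apply]
    rw [h]
    nlinarith [sq_nonneg (‖M.X N a ω‖ - ‖M.X N b ω‖), norm_nonneg (M.X N a ω),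
      norm_nonneg (M.X N b ω)]

lemma E_X (a : Fin (2 * k) → Fin N) : ∫ ω, M.X N a ω ∂(M.μ N) = 0 := by
  have h := MeasureTheory.integral_map (φ := M.X N a) (f := fun z : ℂ => z)
    (M.meas N a).aemeasurable (by rw [M.law N a]; exact aestronglyMeasurable_id)
  rw [M.law N a] at h
  rw [← h, M.centered N]

lemma E_mul_conj (a b : Fin (2 * k) → Fin N) :
    ∫ ω, M.X N a ω * (starRingEnd ℂ) (M.X N b ω) ∂(M.μ N)
      = if a = b then (((∫ z : ℂ, ‖z‖ ^ 2 ∂(M.ν N)) : ℝ) : ℂ) else 0 := by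
  rcases eq_or_ne a b with rfl | hab
  · rw [if_pos rfl]
    have hmeas : AEStronglyMeasurable (fun z : ℂ => z * (starRingEnd ℂ) z)
        ((M.μ N).map (M.X N a)) :=
      (measurable_id.mul measurable_conj').aestronglyMeasurable
    have h := MeasureTheory.integral_map (φ := M.X N a)
      (f := fun z : ℂ => z * (starRingEnd ℂ) z) (M.meas N a).aemeasurable hmeas
    rw [M.law N a] at h
    rw [← h]
    have : (fun z : ℂ => z * (starRingEnd ℂ) z) = fun z : ℂ => ((‖z‖ ^ 2 : ℝ) : ℂ) := by
      funext z
      rw [Complex.mul_conj, Complex.normSq_eq_norm_sq]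
    rw [this]
    exact integral_ofReal (𝕜 := ℂ) (f := fun z : ℂ => ‖z‖ ^ 2)
  · rw [if_neg hab]
    have hindep : IndepFun (M.X N a) (M.X N b) (M.μ N) :=
      (M.indep N).indepFun hab
    have hindep2 : IndepFun (M.X N a) (fun ω => (starRingEnd ℂ) (M.X N b ω)) (M.μ N) :=
      hindep.comp measurable_id measurable_conj'
    have hint2 : Integrable (fun ω => (starRingEnd ℂ) (M.X N b ω)) (M.μ N) := by
      refine (integrable_norm_iff ?_).mp ?_
      · exact (measurable_conj'.comp (M.meas N b)).aestronglyMeasurable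
      · simpa [RCLike.norm_conj] using (M.integrable_X N b).norm
    rw [indepFun_integral_mul_complex hindep2 (M.integrable_X N a) hint2, M.E_X N a,
      zero_mul]

end TensorModel


end ProbLemmas

section Main
open MeasureTheory ProbabilityTheory Equiv

variable {k : ℕ} {c : ℝ} {c' : ℂ}

lemma S2_apply (M : TensorModel k c c') (N : ℕ) (ω : M.Ω N) (i j : Fin k → Fin N) :
    S2 M N ω i j = ∑ σ : Equiv.Perm (Fin (2 * k)),
      alphaC k c * ((Equiv.Perm.sign σ : ℤ) : ℂ) *
        M.X N (glueIdx k N i j ∘ ⇑σ.symm) ω := by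
  simp only [S2, Matrix.smul_apply, Matrix.sum_apply, Matrix.smul_apply, smul_eq_mul,
    Finset.mul_sum, alphaC]
  refine Finset.sum_congr rfl fun σ _ => ?_
  rw [mul_assoc]
  rfl

lemma trace_S2_expand (M : TensorModel k c c') (N : ℕ) (η η' : Equiv.Perm (Fin k))
    (ω : M.Ω N) :
    (S2 M N ω * Umat k N η * (S2 M N ω)ᴴ * (Umat k N η')ᴴ).trace
      = ∑ p : Fin k → Fin N, ∑ l : Fin k → Fin N,
          ∑ σ : Equiv.Perm (Fin (2 * k)), ∑ σ' : Equiv.Perm (Fin (2 * k)),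
        (alphaC k c * alphaC k c) *
          (((Equiv.Perm.sign σ : ℤ) : ℂ) * ((Equiv.Perm.sign σ' : ℤ) : ℂ)) *
          (M.X N (glueIdx k N (p ∘ ⇑η') (l ∘ ⇑η) ∘ ⇑σ.symm) ω *
            (starRingEnd ℂ) (M.X N (glueIdx k N p l ∘ ⇑σ'.symm) ω)) := by
  rw [trace_formula]
  refine Finset.sum_congr rfl fun p _ => Finset.sum_congr rfl fun l _ => ?_
  rw [S2_apply, S2_apply, map_sum, Finset.sum_mul_sum]
  refine Finset.sum_congr rfl fun σ _ => Finset.sum_congr rfl fun σ' _ => ?_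
  rw [_root_.map_mul, _root_.map_mul]
  rw [show (starRingEnd ℂ) (alphaC k c) = alphaC k c from Complex.conj_ofReal _]
  rw [show (starRingEnd ℂ) (((Equiv.Perm.sign σ' : ℤ) : ℂ))
    = ((Equiv.Perm.sign σ' : ℤ) : ℂ) from map_intCast _ _]
  ring

lemma key_formula (M : TensorModel k c c') (N : ℕ) (η η' : Equiv.Perm (Fin k)) :
    Phi k N (M.μ N) (fun ω =>
        S2 M N ω * Umat k N η * (S2 M N ω)ᴴ * (Umat k N η')ᴴ)
      = ((N : ℂ) ^ k)⁻¹ * (alphaC k c * alphaC k c) *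
          (((∫ z : ℂ, ‖z‖ ^ 2 ∂(M.ν N)) : ℝ) : ℂ) *
          (((2 * k).factorial : ℂ) *
            (((Equiv.Perm.sign η : ℤ) : ℂ) * ((Equiv.Perm.sign η' : ℤ) : ℂ)) *
            (N.descFactorial (2 * k) : ℂ)) := by
  classical
  set m2 : ℂ := (((∫ z : ℂ, ‖z‖ ^ 2 ∂(M.ν N)) : ℝ) : ℂ) with hm2
  set A : ℂ := alphaC k c * alphaC k c with hA
  have hint : ∀ (p l : Fin k → Fin N) (σ σ' : Equiv.Perm (Fin (2 * k))),
      Integrable (fun ω =>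
        A * (((Equiv.Perm.sign σ : ℤ) : ℂ) * ((Equiv.Perm.sign σ' : ℤ) : ℂ)) *
          (M.X N (glueIdx k N (p ∘ ⇑η') (l ∘ ⇑η) ∘ ⇑σ.symm) ω *
            (starRingEnd ℂ) (M.X N (glueIdx k N p l ∘ ⇑σ'.symm) ω))) (M.μ N) :=
    fun p l σ σ' => (M.integrable_mul_conj N _ _).const_mul _
  rw [Phi, MeasureTheory.integral_const_mul,
    integral_congr_ae (Filter.Eventually.of_forall fun ω => trace_S2_expand M N η η' ω)]
  rw [integral_finset_sum _ (fun p _ => integrable_finset_sum _ (fun l _ =>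
    integrable_finset_sum _ (fun σ _ => integrable_finset_sum _ (fun σ' _ =>
      hint p l σ σ'))))]
  have hpush : ∀ p : Fin k → Fin N,
      (∫ ω, ∑ l : Fin k → Fin N, ∑ σ : Equiv.Perm (Fin (2 * k)),
          ∑ σ' : Equiv.Perm (Fin (2 * k)),
        A * (((Equiv.Perm.sign σ : ℤ) : ℂ) * ((Equiv.Perm.sign σ' : ℤ) : ℂ)) *
          (M.X N (glueIdx k N (p ∘ ⇑η') (l ∘ ⇑η) ∘ ⇑σ.symm) ω *
            (starRingEnd ℂ) (M.X N (glueIdx k N p l ∘ ⇑σ'.symm) ω)) ∂(M.μ N))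
      = ∑ l : Fin k → Fin N, ∑ σ : Equiv.Perm (Fin (2 * k)),
          ∑ σ' : Equiv.Perm (Fin (2 * k)),
        (A * m2) * ((((Equiv.Perm.sign σ : ℤ) : ℂ) * ((Equiv.Perm.sign σ' : ℤ) : ℂ)) *
          (if glueIdx k N (p ∘ ⇑η') (l ∘ ⇑η) ∘ ⇑σ.symm = glueIdx k N p l ∘ ⇑σ'.symm
            then 1 else 0)) := by
    intro p
    rw [integral_finset_sum _ (fun l _ => integrable_finset_sum _ (fun σ _ =>
      integrable_finset_sum _ (fun σ' _ => hint p l σ σ')))]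
    refine Finset.sum_congr rfl fun l _ => ?_
    rw [integral_finset_sum _ (fun σ _ => integrable_finset_sum _ (fun σ' _ =>
      hint p l σ σ'))]
    refine Finset.sum_congr rfl fun σ _ => ?_
    rw [integral_finset_sum _ (fun σ' _ => hint p l σ σ')]
    refine Finset.sum_congr rfl fun σ' _ => ?_
    rw [MeasureTheory.integral_const_mul, M.E_mul_conj N]
    by_cases h : glueIdx k N (p ∘ ⇑η') (l ∘ ⇑η) ∘ ⇑σ.symm = glueIdx k N p l ∘ ⇑σ'.symm
    · rw [if_pos h, if_pos h]; ring
    · rw [if_neg h, if_neg h]; ring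
  rw [Finset.sum_congr rfl fun p _ => hpush p]
  have hfactor :
      (∑ p : Fin k → Fin N, ∑ l : Fin k → Fin N,
          ∑ σ : Equiv.Perm (Fin (2 * k)), ∑ σ' : Equiv.Perm (Fin (2 * k)),
        (A * m2) * ((((Equiv.Perm.sign σ : ℤ) : ℂ) * ((Equiv.Perm.sign σ' : ℤ) : ℂ)) *
          (if glueIdx k N (p ∘ ⇑η') (l ∘ ⇑η) ∘ ⇑σ.symm = glueIdx k N p l ∘ ⇑σ'.symm
            then 1 else 0)))
      = (A * m2) * ∑ p : Fin k → Fin N, ∑ l : Fin k → Fin N,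
          ∑ σ : Equiv.Perm (Fin (2 * k)), ∑ σ' : Equiv.Perm (Fin (2 * k)),
        (((Equiv.Perm.sign σ : ℤ) : ℂ) * ((Equiv.Perm.sign σ' : ℤ) : ℂ)) *
          (if glueIdx k N (p ∘ ⇑η') (l ∘ ⇑η) ∘ ⇑σ.symm = glueIdx k N p l ∘ ⇑σ'.symm
            then 1 else 0) := by
    simp only [← Finset.mul_sum]
  rw [hfactor]
  have hcomb :
      (∑ p : Fin k → Fin N, ∑ l : Fin k → Fin N,
          ∑ σ : Equiv.Perm (Fin (2 * k)), ∑ σ' : Equiv.Perm (Fin (2 * k)),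
        (((Equiv.Perm.sign σ : ℤ) : ℂ) * ((Equiv.Perm.sign σ' : ℤ) : ℂ)) *
          (if glueIdx k N (p ∘ ⇑η') (l ∘ ⇑η) ∘ ⇑σ.symm = glueIdx k N p l ∘ ⇑σ'.symm
            then 1 else 0))
      = ((2 * k).factorial : ℂ) *
          (((Equiv.Perm.sign η : ℤ) : ℂ) * ((Equiv.Perm.sign η' : ℤ) : ℂ)) *
          (N.descFactorial (2 * k) : ℂ) := by
    exact comb k N η η'
  rw [hcomb]
  ring

lemma desc_div_tendsto_real (n : ℕ) :
    Tendsto (fun N : ℕ => (N.descFactorial n : ℝ) / (N : ℝ) ^ n) atTop (nhds 1) := by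
  have h : ∀ᶠ N : ℕ in atTop, (∏ i ∈ Finset.range n, (1 - (i : ℝ) / (N : ℝ)))
      = (N.descFactorial n : ℝ) / (N : ℝ) ^ n := by
    filter_upwards [eventually_ge_atTop (max n 1)] with N hN
    have hn : n ≤ N := le_trans (le_max_left _ _) hN
    have hN1 : 1 ≤ N := le_trans (le_max_right _ _) hN
    have hN0 : (N : ℝ) ≠ 0 := by positivity
    rw [Nat.descFactorial_eq_prod_range, Nat.cast_prod]
    rw [show ((N : ℝ) ^ n) = ∏ _i ∈ Finset.range n, (N : ℝ) from by
      rw [Finset.prod_const, Finset.card_range]]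
    rw [← Finset.prod_div_distrib]
    refine Finset.prod_congr rfl fun i hi => ?_
    rw [Nat.cast_sub (le_trans (le_of_lt (Finset.mem_range.mp hi)) hn)]
    field_simp
  refine Tendsto.congr' h ?_
  have hprod := tendsto_finset_prod (Finset.range n)
    (fun i (_ : i ∈ Finset.range n) =>
      ((tendsto_const_div_atTop_nhds_zero_nat (i : ℝ)).const_sub 1 :
        Tendsto (fun N : ℕ => 1 - (i : ℝ) / (N : ℝ)) atTop (nhds (1 - 0))))
  simpa using hprod

lemma desc_div_tendsto_complex (n : ℕ) :
    Tendsto (fun N : ℕ => (N.descFactorial n : ℂ) / (N : ℂ) ^ n) atTop (nhds 1) := by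
  have h := (Complex.continuous_ofReal.tendsto 1).comp (desc_div_tendsto_real n)
  have heq : (fun N : ℕ => ((((N.descFactorial n : ℝ) / (N : ℝ) ^ n) : ℝ) : ℂ))
      = fun N : ℕ => (N.descFactorial n : ℂ) / (N : ℂ) ^ n := by
    funext N; push_cast; ring
  simp only [Function.comp_def] at h
  rw [heq] at h
  simpa using h

end Main

/-- For a random tensor satisfying Hypothesis (TensorModel) with parameter
`(c, c')`, for all `η, η' ∈ S_k`, `Φ_N(S_{2,N}·U_{N,η}·S_{2,N}^*·U_{N,η'}^*)` converges to
`sgn(η)·sgn(η')/k!` as `N → ∞`. -/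
theorem covariance_S2 (k : ℕ) (hk : 1 ≤ k) (c : ℝ) (c' : ℂ) (M : TensorModel k c c')
    (η η' : Equiv.Perm (Fin k)) :
    Tendsto (fun N : ℕ =>
        Phi k N (M.μ N) (fun ω =>
          S2 M N ω * Umat k N η * (S2 M N ω)ᴴ * (Umat k N η')ᴴ))
      atTop (nhds ((((Equiv.Perm.sign η : ℤ) : ℂ) * ((Equiv.Perm.sign η' : ℤ) : ℂ)) /
        (k.factorial : ℂ))) := by
  classical
  set s : ℂ := ((Equiv.Perm.sign η : ℤ) : ℂ) * ((Equiv.Perm.sign η' : ℤ) : ℂ) with hs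
  set A : ℂ := alphaC k c * alphaC k c with hA
  set C0 : ℂ := A * ((2 * k).factorial : ℂ) * s with hC0
  have h1 : Tendsto (fun N : ℕ =>
      ((((N : ℝ) ^ k * ∫ z : ℂ, ‖z‖ ^ 2 ∂(M.ν N)) : ℝ) : ℂ)) atTop (nhds (c : ℂ)) := by
    have := (Complex.continuous_ofReal.tendsto c).comp M.lim_abs_sq
    simpa [Function.comp_def] using this
  have h2 := desc_div_tendsto_complex (2 * k)
  have hlim : Tendsto (fun N : ℕ =>
      C0 * ((((N : ℝ) ^ k * ∫ z : ℂ, ‖z‖ ^ 2 ∂(M.ν N)) : ℝ) : ℂ) *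
        ((N.descFactorial (2 * k) : ℂ) / (N : ℂ) ^ (2 * k)))
      atTop (nhds (C0 * (c : ℂ) * 1)) :=
    (tendsto_const_nhds.mul h1).mul h2
  have h2k : (((2 * k).factorial : ℕ) : ℂ) ≠ 0 :=
    Nat.cast_ne_zero.mpr (Nat.factorial_ne_zero _)
  have hkf : ((k.factorial : ℕ) : ℂ) ≠ 0 :=
    Nat.cast_ne_zero.mpr (Nat.factorial_ne_zero _)
  have hcnz : (c : ℂ) ≠ 0 := by
    simp only [ne_eq, Complex.ofReal_eq_zero]
    exact ne_of_gt M.c_pos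
  have hval : C0 * (c : ℂ) * 1 = s / (k.factorial : ℂ) := by
    rw [mul_one, hC0, hA, alphaC]
    have hge : (0 : ℝ) ≤ (((2 * k).factorial * k.factorial : ℕ) : ℝ) * c :=
      mul_nonneg (Nat.cast_nonneg _) M.c_pos.le
    have hsqrt : (Real.sqrt ((((2 * k).factorial * k.factorial : ℕ) : ℝ) * c))⁻¹
        * (Real.sqrt ((((2 * k).factorial * k.factorial : ℕ) : ℝ) * c))⁻¹
        = ((((2 * k).factorial * k.factorial : ℕ) : ℝ) * c)⁻¹ := by
      rw [← mul_inv, Real.mul_self_sqrt hge]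
    rw [← Complex.ofReal_mul, hsqrt, Complex.ofReal_inv, Complex.ofReal_mul]
    push_cast
    field_simp
  have hfun : (fun N : ℕ =>
      C0 * ((((N : ℝ) ^ k * ∫ z : ℂ, ‖z‖ ^ 2 ∂(M.ν N)) : ℝ) : ℂ) *
        ((N.descFactorial (2 * k) : ℂ) / (N : ℂ) ^ (2 * k)))
      =ᶠ[atTop] (fun N : ℕ => Phi k N (M.μ N) (fun ω =>
          S2 M N ω * Umat k N η * (S2 M N ω)ᴴ * (Umat k N η')ᴴ)) := by
    filter_upwards [Filter.eventually_ge_atTop 1] with N hN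
    rw [key_formula M N η η']
    have hN0 : (N : ℂ) ≠ 0 := Nat.cast_ne_zero.mpr (by omega)
    have hNk : ((N : ℂ) ^ k) ≠ 0 := pow_ne_zero _ hN0
    have hNk2 : ((N : ℂ) ^ (2 * k)) ≠ 0 := pow_ne_zero _ hN0
    rw [hC0, hA]
    push_cast
    field_simp
    ring
  exact Tendsto.congr' hfun (hval ▸ hlim)
end
end

section
/- Fix integers k ≥ 1 and L ≥ 1, and let V = {1,…,k} × {1,…,L} with the convention that the second coordinate is taken cyclically (i.e., L+1 is identified with 1). Let π be any partition of V, and for v ∈ V write [v]_π for the block of π containing v. For each ℓ ∈ {1,…,L}, define the skeleton hyperedge ē_ℓ := { [(i, ℓ)]_π : i ∈ {1,…,k} } ∪ { [(i, ℓ+1)]_π : i ∈ {1,…,k} }, a set of blocks of π. Then the number of blocks of π satisfies |π| ≤ k + k·|{ē_ℓ : ℓ ∈ {1,…,L}}|, i.e., −k − k·(number of distinct skeleton hyperedges) + (number of blocks of π) ≤ 0. -/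
open Finset


/-- Let `V = {1,…,k} × {1,…,L}` (with the second coordinate cyclic) and
let `π` be any partition of `V` (encoded as a setoid, whose blocks are the equivalence
classes).  For `ℓ ∈ {1,…,L}`, the skeleton hyperedge `ē_ℓ` is the set of blocks meeting
column `ℓ` or column `ℓ+1`.  Then the number of blocks of `π` is at most
`k + k·(number of distinct skeleton hyperedges)`. -/
theorem card_blocks_le_skeleton_bound (k L : ℕ) (hk : 1 ≤ k) [NeZero L]
    (π : Setoid (Fin k × Fin L)) :
    Nat.card (Quotient π) ≤
      k + k * Set.ncard (Set.range (fun ℓ : Fin L =>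
        (Set.range fun i : Fin k => Quotient.mk π (i, ℓ)) ∪
          (Set.range fun i : Fin k => Quotient.mk π (i, ℓ + 1)))) := by
  classical
  have hL : 0 < L := Nat.pos_of_ne_zero (NeZero.ne L)
  set C : Fin L → Finset (Quotient π) :=
    fun ℓ => Finset.univ.image (fun i : Fin k => Quotient.mk π (i, ℓ)) with hC
  set Ed : Fin L → Finset (Quotient π) := fun ℓ => C ℓ ∪ C (ℓ + 1) with hEd
  have hadd : ∀ j : Fin L, j.val + 1 < L → ((j + 1 : Fin L) : ℕ) = j.val + 1 := by
    intro j hj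
    have h1 : (1 : Fin L).val = 1 := by
      rw [Fin.val_one']; exact Nat.mod_eq_of_lt (by omega)
    rw [Fin.add_def, h1]
    exact Nat.mod_eq_of_lt (by omega)
  have hCcard : ∀ ℓ, (C ℓ).card ≤ k := by
    intro ℓ
    calc (C ℓ).card ≤ (Finset.univ : Finset (Fin k)).card := Finset.card_image_le
    _ = k := by simp
  -- main induction
  have main : ∀ n : ℕ, 1 ≤ n → n ≤ L →
      ((Finset.univ.filter fun j : Fin L => j.val < n).biUnion C).card ≤
        k + k * ((Finset.univ.filter fun j : Fin L => j.val + 1 < n).image Ed).card := by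
    intro n
    induction n with
    | zero => omega
    | succ n ih =>
      intro _ hn1
      rcases Nat.eq_zero_or_pos n with rfl | hn
      · have h0 : (Finset.univ.filter fun j : Fin L => j.val < 1) = {(0 : Fin L)} := by
          ext j; simp only [Finset.mem_filter, Finset.mem_univ, true_and, Finset.mem_singleton, Fin.ext_iff, Fin.val_zero]; omega
        have h1 : (Finset.univ.filter fun j : Fin L => j.val + 1 < 1) = ∅ := by
          ext j; simp
        rw [h0, h1]
        simpa using hCcard 0
      · -- n ≥ 1
        have hnL : n < L := hn1
        have hn1L : n ≤ L := le_of_lt hnL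
        set jn : Fin L := ⟨n, hnL⟩ with hjn
        set jp : Fin L := ⟨n - 1, by omega⟩ with hjp
        have hjpn : jp + 1 = jn := by
          apply Fin.ext
          rw [hadd jp (by simp [hjp]; omega)]
          simp [hjp, hjn]; omega
        have hA : (Finset.univ.filter fun j : Fin L => j.val < n + 1)
            = insert jn (Finset.univ.filter fun j : Fin L => j.val < n) := by
          ext j; simp [Fin.ext_iff, hjn]; omega
        have hB : (Finset.univ.filter fun j : Fin L => j.val + 1 < n + 1)
            = insert jp (Finset.univ.filter fun j : Fin L => j.val + 1 < n) := by
          ext j; simp [Fin.ext_iff, hjp]; omega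
        have ihn := ih hn hn1L
        have hsub : ∀ j : Fin L, j.val < n →
            C j ⊆ (Finset.univ.filter fun j : Fin L => j.val < n).biUnion C := by
          intro j hj
          exact Finset.subset_biUnion_of_mem C (by simp [hj])
        rw [hA, hB, Finset.biUnion_insert, Finset.image_insert]
        by_cases he : Ed jp ∈ (Finset.univ.filter fun j : Fin L => j.val + 1 < n).image Ed
        · -- repeated edge: new column already covered
          obtain ⟨j', hj', hj'e⟩ := Finset.mem_image.mp he
          have hj'n : j'.val + 1 < n := (Finset.mem_filter.mp hj').2
          have hCjn : C jn ⊆ (Finset.univ.filter fun j : Fin L => j.val < n).biUnion C := by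
            have h1 : C jn ⊆ Ed jp := by
              rw [← hjpn]; exact Finset.subset_union_right
            rw [← hj'e] at h1
            have h1' : C jn ⊆ C j' ∪ C (j' + 1) := h1
            refine h1'.trans (Finset.union_subset (hsub j' (by omega)) ?_)
            exact hsub (j' + 1) (by rw [hadd j' (by omega)]; omega)
          rw [Finset.union_eq_right.mpr hCjn, Finset.insert_eq_self.mpr he]
          exact ihn
        · -- new edge
          have h2 : (insert (Ed jp) ((Finset.univ.filter fun j : Fin L => j.val + 1 < n).image Ed)).card
              = ((Finset.univ.filter fun j : Fin L => j.val + 1 < n).image Ed).card + 1 :=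
            Finset.card_insert_of_notMem he
          rw [h2]
          calc (C jn ∪ (Finset.univ.filter fun j : Fin L => j.val < n).biUnion C).card
              ≤ (C jn).card + ((Finset.univ.filter fun j : Fin L => j.val < n).biUnion C).card :=
                Finset.card_union_le _ _
            _ ≤ k + (k + k * ((Finset.univ.filter fun j : Fin L => j.val + 1 < n).image Ed).card) :=
                Nat.add_le_add (hCcard jn) ihn
            _ = k + k * (((Finset.univ.filter fun j : Fin L => j.val + 1 < n).image Ed).card + 1) := by
                ring
  -- conclusion
  have hmainL := main L (by omega) le_rfl
  have hAll : (Finset.univ.filter fun j : Fin L => j.val < L) = Finset.univ := by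
    ext j; simp [j.isLt]
  have hcov : (Finset.univ : Finset (Fin L)).biUnion C = Finset.univ := by
    apply Finset.eq_univ_of_forall
    intro q
    obtain ⟨⟨i, ℓ⟩, rfl⟩ := Quotient.exists_rep q
    exact Finset.mem_biUnion.mpr ⟨ℓ, Finset.mem_univ _,
      Finset.mem_image.mpr ⟨i, Finset.mem_univ _, rfl⟩⟩
  rw [hAll, hcov] at hmainL
  have hcardQ : Nat.card (Quotient π) = (Finset.univ : Finset (Quotient π)).card := by
    simp [Nat.card_eq_fintype_card]
  -- relate the filtered edge image to the full range
  have hEdsub : ((Finset.univ.filter fun j : Fin L => j.val + 1 < L).image Ed).card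
      ≤ ((Finset.univ : Finset (Fin L)).image Ed).card :=
    Finset.card_le_card (Finset.image_subset_image (Finset.filter_subset _ _))
  have hrange : Set.ncard (Set.range (fun ℓ : Fin L =>
        (Set.range fun i : Fin k => Quotient.mk π (i, ℓ)) ∪
          (Set.range fun i : Fin k => Quotient.mk π (i, ℓ + 1))))
      = ((Finset.univ : Finset (Fin L)).image Ed).card := by
    have hfun : (fun ℓ : Fin L =>
        (Set.range fun i : Fin k => Quotient.mk π (i, ℓ)) ∪
          (Set.range fun i : Fin k => Quotient.mk π (i, ℓ + 1)))
        = fun ℓ : Fin L => ((Ed ℓ : Finset (Quotient π)) : Set (Quotient π)) := by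
      funext ℓ
      rw [hEd, Finset.coe_union, hC]
      congr 1 <;> · ext q; simp
    rw [hfun]
    have : Set.range (fun ℓ : Fin L => ((Ed ℓ : Finset (Quotient π)) : Set (Quotient π)))
        = (fun s : Finset (Quotient π) => (s : Set (Quotient π))) '' Set.range Ed := by
      rw [← Set.range_comp]; rfl
    rw [this, Set.ncard_image_of_injective _ Finset.coe_injective]
    have : Set.range Ed = (((Finset.univ : Finset (Fin L)).image Ed : Finset _) : Set _) := by
      rw [Finset.coe_image, Finset.coe_univ, Set.image_univ]
    rw [this, Set.ncard_coe_finset]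
  rw [hcardQ, hrange]
  exact hmainL.trans (by exact Nat.add_le_add_left (Nat.mul_le_mul_left k hEdsub) k)
end
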